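/- The reflexive sheaf R defined by R(B_0^+) = j(𝔤(B_0)) ∩ 𝔤(B^+) on Y_0 = Spec(B_0^+) ≅ 𝔸^ℓ is locally free of rank dim 𝔤, and carries a Lie bracket induced from 𝔤(B) extending the trivial Lie algebra bundle 𝔤 × T_ad over the open torus. -/

import Mathlib

open scoped TensorProduct

namespace Stmt14Aux

variable {k : Type} [Field k] {S : Type} [Fintype S] [DecidableEq S]
variable {𝔤 : Type} [LieRing 𝔤] [LieAlgebra k 𝔤]
variable (gw : (S → ℤ) → Submodule k 𝔤)

/-- The k-linear "twist by weights" map `x ↦ Σ_a y^{r' a} ⊗ x_a`. -/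
noncomputable def psi0 (h : DirectSum.IsInternal gw) (r' : (S → ℤ) → (S → ℤ)) :
    𝔤 →ₗ[k] AddMonoidAlgebra k (S → ℤ) ⊗[k] 𝔤 :=
  (DirectSum.toModule k (S → ℤ) (AddMonoidAlgebra k (S → ℤ) ⊗[k] 𝔤) fun a =>
      (TensorProduct.mk k (AddMonoidAlgebra k (S → ℤ)) 𝔤
        (AddMonoidAlgebra.single (r' a) 1)).comp (gw a).subtype) ∘ₗ
    (LinearEquiv.ofBijective (DirectSum.coeLinearMap gw) h).symm.toLinearMap

set_option linter.unusedSectionVars false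

lemma psi0_apply (h : DirectSum.IsInternal gw) (r' : (S → ℤ) → (S → ℤ))
    {a : S → ℤ} {x : 𝔤} (hx : x ∈ gw a) :
    psi0 gw h r' x = (AddMonoidAlgebra.single (r' a) (1 : k)) ⊗ₜ[k] x := by
  have h1 : (LinearEquiv.ofBijective (DirectSum.coeLinearMap gw) h).symm x
      = DirectSum.lof k (S → ℤ) (fun a => gw a) a ⟨x, hx⟩ := by
    rw [LinearEquiv.symm_apply_eq, DirectSum.lof_eq_of]
    exact (DirectSum.coeLinearMap_of (R := k) (A := gw) a ⟨x, hx⟩).symm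
  unfold psi0
  rw [LinearMap.comp_apply, LinearEquiv.coe_coe, h1, DirectSum.toModule_lof]
  rfl

lemma ext_weights (h : DirectSum.IsInternal gw) {W : Type*} [AddCommMonoid W] [Module k W]
    {f g : AddMonoidAlgebra k (S → ℤ) ⊗[k] 𝔤 →ₗ[k] W}
    (hfg : ∀ (l : AddMonoidAlgebra k (S → ℤ)) (a : S → ℤ) (x : 𝔤), x ∈ gw a →
      f (l ⊗ₜ[k] x) = g (l ⊗ₜ[k] x)) : f = g := by
  apply TensorProduct.ext'
  intro l x
  have hx : x ∈ ⨆ a, gw a := by rw [h.submodule_iSup_eq_top]; trivial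
  refine Submodule.iSup_induction (motive := fun y => f (l ⊗ₜ[k] y) = g (l ⊗ₜ[k] y)) gw hx
    (fun a y hy => hfg l a y hy) (by simp [TensorProduct.tmul_zero]) ?_
  intro u v hu hv
  rw [TensorProduct.tmul_add, map_add, map_add, hu, hv]

lemma mem_of_weights (h : DirectSum.IsInternal gw) {M : Type*} [AddCommMonoid M] [Module k M]
    (f : 𝔤 →ₗ[k] M) (C : M → Prop)
    (hf : ∀ (a : S → ℤ) (x : 𝔤), x ∈ gw a → C (f x)) (h0 : C 0)
    (hadd : ∀ u v, C u → C v → C (u + v)) (x : 𝔤) : C (f x) := by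
  have hx : x ∈ ⨆ a, gw a := by rw [h.submodule_iSup_eq_top]; trivial
  refine Submodule.iSup_induction (motive := fun y => C (f y)) gw hx hf (by simpa using h0) ?_
  intro u v hu hv
  rw [map_add]; exact hadd _ _ hu hv

lemma phi_monomial (N : S → ℕ) (d : S →₀ ℕ) (c : k) :
    MvPolynomial.aeval (R := k)
      (fun α => AddMonoidAlgebra.single (fun β => if β = α then (N α : ℤ) else 0) (1 : k))
      (MvPolynomial.monomial d c)
    = AddMonoidAlgebra.single (fun β => (N β : ℤ) * d β) c := by
  induction d using Finsupp.induction with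
  | zero =>
      rw [MvPolynomial.monomial_zero', MvPolynomial.aeval_C]
      have : (fun β => (N β : ℤ) * ((0 : S →₀ ℕ) β)) = (0 : S → ℤ) := by
        funext β; simp
      rw [this]
      rw [AddMonoidAlgebra.coe_algebraMap]
      simp
  | single_add α n f hαf hn ih =>
      have hmono : (MvPolynomial.monomial (Finsupp.single α n + f) c : MvPolynomial S k)
          = MvPolynomial.monomial (Finsupp.single α n) 1 * MvPolynomial.monomial f c := by
        rw [MvPolynomial.monomial_mul, one_mul]
      rw [hmono, map_mul, ih, ← MvPolynomial.X_pow_eq_monomial, map_pow,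
        MvPolynomial.aeval_X, AddMonoidAlgebra.single_pow, one_pow,
        AddMonoidAlgebra.single_mul_single, one_mul]
      congr 1
      funext β
      by_cases hβ : β = α
      · subst hβ
        simp [Finsupp.single_apply, mul_add, mul_comm]
      · simp [Finsupp.single_apply, hβ, Ne.symm hβ, mul_add]

lemma phi_injective (N : S → ℕ) (hN : ∀ α, 0 < N α) :
    Function.Injective (MvPolynomial.aeval (R := k)
      (fun α => AddMonoidAlgebra.single (fun β => if β = α then (N α : ℤ) else 0) (1 : k))) := by
  set F : (S →₀ ℕ) → (S → ℤ) := fun d β => (N β : ℤ) * d β with hF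
  have hFinj : Function.Injective F := by
    intro d d' h
    ext β
    have := congrFun h β
    simp only [hF] at this
    have h2 : (d β : ℤ) = d' β := by
      have hNβ : ((N β : ℤ)) ≠ 0 := by exact_mod_cast (hN β).ne'
      exact mul_left_cancel₀ hNβ this
    exact_mod_cast h2
  have key : ∀ p : MvPolynomial S k,
      MvPolynomial.aeval (R := k)
        (fun α => AddMonoidAlgebra.single (fun β => if β = α then (N α : ℤ) else 0) (1 : k)) p
      = AddMonoidAlgebra.mapDomain F p := by
    intro p
    induction p using MvPolynomial.induction_on' with
    | monomial d c =>
        rw [phi_monomial, ← MvPolynomial.single_eq_monomial, AddMonoidAlgebra.mapDomain_single]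
    | add p q hp hq =>
        rw [map_add, hp, hq, AddMonoidAlgebra.mapDomain_add]
  intro p q h
  rw [key p, key q] at h
  exact AddMonoidAlgebra.mapDomain_injective hFinj h

end Stmt14Aux

set_option maxHeartbeats 1600000 in
/-- The sheaf `R` on `Y₀ = Spec(B₀⁺) ≅ 𝔸^ℓ` defined by `R(B₀⁺) = j(𝔤(B₀)) ∩ 𝔤(B⁺)` is
locally free of rank `dim 𝔤` and carries a Lie bracket induced from `𝔤(B)` extending the
trivial Lie algebra bundle `𝔤 × T_ad` over the open torus.  Model: `B = k[y_α^{±1}]` is the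
monoid algebra `L` of `S → ℤ`, `B₀⁺ = k[x_α] = P` maps to `L` by `x_α ↦ y_α^{N_α}`, and the
twist `j = Ad ∘ 𝔯` is encoded by a `T_ad`-weight decomposition of `𝔤` into submodules
`gw a`, `a : S → ℤ` (an internal direct sum compatible with the bracket).  The submodule
`RR ⊆ B ⊗ 𝔤 = 𝔤(B)` spanned over `P` by the elements `y^m ⊗ x` with `x ∈ gw a`, `m ≥ 0`
and `m ≡ a (mod N)` is free of rank `dim 𝔤` over `P`, is closed under the Lie bracket of
`𝔤(B)`, and spans `𝔤(B)` over `B` (i.e. restricts to the trivial bundle on the torus). -/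
theorem stmt14 (k : Type) [Field k] (S : Type) [Fintype S] [DecidableEq S]
    (N : S → ℕ) (hN : ∀ α, 0 < N α)
    (𝔤 : Type) [LieRing 𝔤] [LieAlgebra k 𝔤] [FiniteDimensional k 𝔤]
    (gw : (S → ℤ) → Submodule k 𝔤)
    (hdirect : DirectSum.IsInternal gw)
    (hfin : (Function.support gw).Finite)
    (hbr : ∀ (a b : S → ℤ) (x y : 𝔤), x ∈ gw a → y ∈ gw b → ⁅x, y⁆ ∈ gw (a + b)) :
    let L := AddMonoidAlgebra k (S → ℤ)
    let P := MvPolynomial S k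
    let φ : P →+* L := (MvPolynomial.aeval (R := k)
      (fun α => AddMonoidAlgebra.single (fun β => if β = α then (N α : ℤ) else 0)
        (1 : k))).toRingHom
    letI : Module P (L ⊗[k] 𝔤) := Module.compHom (L ⊗[k] 𝔤) φ
    let RR : Submodule P (L ⊗[k] 𝔤) := Submodule.span P
      {t : L ⊗[k] 𝔤 | ∃ (m a : S → ℤ) (x : 𝔤), x ∈ gw a ∧ (∀ α, 0 ≤ m α) ∧
        (∀ α, (N α : ℤ) ∣ (m α - a α)) ∧ t = (AddMonoidAlgebra.single m (1 : k)) ⊗ₜ[k] x}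
    -- `RR` is free (locally free) of rank `dim 𝔤` over `B₀⁺`:
    Nonempty (↥RR ≃ₗ[P] (Fin (Module.finrank k 𝔤) → P)) ∧
    -- `RR` is closed under the Lie bracket of `𝔤(B)` induced from `𝔤`:
    (∀ x y : L ⊗[k] 𝔤, x ∈ RR → y ∈ RR → ⁅x, y⁆ ∈ RR) ∧
    -- `RR` extends the trivial Lie algebra bundle over the torus:
    Submodule.span L (RR : Set (L ⊗[k] 𝔤)) = ⊤ := by
  intro L P φ RR
  letI : Module P (L ⊗[k] 𝔤) := Module.compHom (L ⊗[k] 𝔤) φ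
  have hsmul : ∀ (p : P) (v : L ⊗[k] 𝔤), p • v = φ p • v := fun _ _ => rfl
  have hRR : RR = Submodule.span P
      {t : L ⊗[k] 𝔤 | ∃ (m a : S → ℤ) (x : 𝔤), x ∈ gw a ∧ (∀ α, 0 ≤ m α) ∧
        (∀ α, (N α : ℤ) ∣ (m α - a α)) ∧ t = (AddMonoidAlgebra.single m (1 : k)) ⊗ₜ[k] x} := rfl
  have hNz : ∀ α, ((N α : ℤ)) ≠ 0 := fun α => by exact_mod_cast (hN α).ne'
  have hNpos : ∀ α, (0 : ℤ) < N α := fun α => by exact_mod_cast hN α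
  set r : (S → ℤ) → (S → ℤ) := fun a α => a α % (N α : ℤ) with hrdef
  have hr0 : ∀ a α, 0 ≤ r a α := fun a α => Int.emod_nonneg _ (hNz α)
  have hrlt : ∀ a α, r a α < N α := fun a α => Int.emod_lt_of_pos _ (hNpos α)
  have hrdvd : ∀ a α, (N α : ℤ) ∣ (r a α - a α) := fun a α =>
    ⟨-(a α / (N α : ℤ)), by
      show a α % (N α : ℤ) - a α = (N α : ℤ) * -(a α / (N α : ℤ))
      rw [Int.emod_def]; ring⟩
  -- the generators of `RR`
  have hgen : ∀ (a : S → ℤ) (x : 𝔤), x ∈ gw a →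
      (AddMonoidAlgebra.single (r a) (1 : k)) ⊗ₜ[k] x ∈ RR := fun a x hx =>
    Submodule.subset_span ⟨r a, a, x, hx, hr0 a, hrdvd a, rfl⟩
  -- the twisting automorphism and its inverse
  set Ψ : L ⊗[k] 𝔤 →ₗ[L] L ⊗[k] 𝔤 :=
    (Stmt14Aux.psi0 gw hdirect r).liftBaseChange L with hΨdef
  set Ψm : L ⊗[k] 𝔤 →ₗ[L] L ⊗[k] 𝔤 :=
    (Stmt14Aux.psi0 gw hdirect (fun a => -(r a))).liftBaseChange L with hΨmdef
  have hΨt : ∀ (l : L) {a : S → ℤ} {x : 𝔤}, x ∈ gw a →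
      Ψ (l ⊗ₜ[k] x) = (l * AddMonoidAlgebra.single (r a) (1 : k)) ⊗ₜ[k] x := by
    intro l a x hx
    rw [hΨdef, LinearMap.liftBaseChange_tmul, Stmt14Aux.psi0_apply gw hdirect r hx,
      TensorProduct.smul_tmul', smul_eq_mul]
  have hΨmt : ∀ (l : L) {a : S → ℤ} {x : 𝔤}, x ∈ gw a →
      Ψm (l ⊗ₜ[k] x) = (l * AddMonoidAlgebra.single (-(r a)) (1 : k)) ⊗ₜ[k] x := by
    intro l a x hx
    rw [hΨmdef, LinearMap.liftBaseChange_tmul,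
      Stmt14Aux.psi0_apply gw hdirect (fun a => -(r a)) hx,
      TensorProduct.smul_tmul', smul_eq_mul]
  have hinv : ∀ v : L ⊗[k] 𝔤, Ψm (Ψ v) = v := by
    have hcomp : (Ψm.restrictScalars k) ∘ₗ (Ψ.restrictScalars k)
        = (LinearMap.id : L ⊗[k] 𝔤 →ₗ[k] L ⊗[k] 𝔤) := by
      apply Stmt14Aux.ext_weights gw hdirect
      intro l a x hx
      simp only [LinearMap.comp_apply, LinearMap.coe_restrictScalars, LinearMap.id_coe, id_eq]
      rw [hΨt l hx, hΨmt _ hx, mul_assoc, AddMonoidAlgebra.single_mul_single, mul_one]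
      rw [show r a + -(r a) = 0 from by funext α; simp]
      rw [← AddMonoidAlgebra.one_def, mul_one]
    intro v
    have := LinearMap.ext_iff.mp hcomp v
    simpa using this
  have hΨinj : Function.Injective ⇑Ψ := Function.LeftInverse.injective hinv
  -- the base-change of `φ`
  set φlin : P →ₗ[k] L := (MvPolynomial.aeval (R := k)
      (fun α => AddMonoidAlgebra.single (fun β => if β = α then (N α : ℤ) else 0)
        (1 : k))).toLinearMap with hφlindef
  set jk : P ⊗[k] 𝔤 →ₗ[k] L ⊗[k] 𝔤 := φlin.rTensor 𝔤 with hjkdef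
  have hjkInj : Function.Injective ⇑jk :=
    Module.Flat.rTensor_preserves_injective_linearMap φlin (Stmt14Aux.phi_injective N hN)
  -- P-linear versions
  set jP : P ⊗[k] 𝔤 →ₗ[P] L ⊗[k] 𝔤 :=
    { toFun := jk
      map_add' := jk.map_add
      map_smul' := by
        intro p t
        simp only [RingHom.id_apply]
        induction t using TensorProduct.induction_on with
        | zero => rw [smul_zero, map_zero, smul_zero]
        | tmul q x =>
            have h1 : p • (q ⊗ₜ[k] x) = (p * q) ⊗ₜ[k] x := by
              rw [TensorProduct.smul_tmul', smul_eq_mul]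
            rw [h1, hjkdef, LinearMap.rTensor_tmul, LinearMap.rTensor_tmul, hsmul,
              TensorProduct.smul_tmul', smul_eq_mul]
            congr 1
            exact map_mul (MvPolynomial.aeval (R := k)
              (fun α => AddMonoidAlgebra.single (fun β => if β = α then (N α : ℤ) else 0)
                (1 : k))) p q
        | add u v hu hv => rw [smul_add, map_add, map_add, smul_add, hu, hv] } with hjPdef
  set ΨP : L ⊗[k] 𝔤 →ₗ[P] L ⊗[k] 𝔤 :=
    { toFun := Ψ
      map_add' := Ψ.map_add
      map_smul' := fun p v => by
        simp only [RingHom.id_apply]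
        rw [hsmul, hsmul, Ψ.map_smul] } with hΨPdef
  set M0 : Submodule P (L ⊗[k] 𝔤) := LinearMap.range jP with hM0def
  have hpsimem : ∀ x : 𝔤, Stmt14Aux.psi0 gw hdirect r x ∈ RR := by
    intro x
    refine Stmt14Aux.mem_of_weights gw hdirect (Stmt14Aux.psi0 gw hdirect r)
      (fun t => t ∈ RR) ?_ (zero_mem RR) (fun u v hu hv => add_mem hu hv) x
    intro a y hy
    rw [Stmt14Aux.psi0_apply gw hdirect r hy]
    exact hgen a y hy
  have hmap : Submodule.map ΨP M0 = RR := by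
    apply le_antisymm
    · rintro v hv
      rcases Submodule.mem_map.mp hv with ⟨w, hw, rfl⟩
      rcases hw with ⟨t, rfl⟩
      clear hv
      show Ψ (jk t) ∈ RR
      induction t using TensorProduct.induction_on with
      | zero => rw [map_zero, map_zero]; exact zero_mem RR
      | tmul p x =>
          rw [hjkdef, LinearMap.rTensor_tmul, hΨdef, LinearMap.liftBaseChange_tmul]
          exact Submodule.smul_mem RR p (hpsimem x)
      | add u v hu hv => rw [map_add, map_add]; exact add_mem hu hv
    · rw [hRR, Submodule.span_le]
      rintro v ⟨m, a, x, hx, hm0, hdvd, rfl⟩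
      have hdvd' : ∀ α, (N α : ℤ) ∣ (m α - r a α) := by
        intro α
        have h3 := dvd_sub (hdvd α) (hrdvd a α)
        rwa [show (m α - a α) - (r a α - a α) = m α - r a α from by ring] at h3
      have ht0 : ∀ α, 0 ≤ m α - r a α := by
        intro α
        rcases hdvd' α with ⟨c, hc⟩
        have hgt : -(N α : ℤ) < m α - r a α := by
          have h4 := hm0 α; have h5 := hrlt a α; linarith
        have hc1 : (-1 : ℤ) < c := by
          by_contra hcon
          push_neg at hcon
          have h6 : (N α : ℤ) * c ≤ (N α : ℤ) * (-1) :=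
            mul_le_mul_of_nonneg_left hcon (le_of_lt (hNpos α))
          rw [hc] at hgt; linarith
        have hc0 : (0 : ℤ) ≤ c := by omega
        rw [hc]; exact mul_nonneg (le_of_lt (hNpos α)) hc0
      set d : S →₀ ℕ :=
        Finsupp.equivFunOnFinite.symm (fun α => ((m α - r a α) / (N α : ℤ)).toNat) with hddef
      have hdco : ∀ β, (d β : ℤ) = ((m β - r a β) / (N β : ℤ)).toNat := fun β => rfl
      have hd : (fun β => (N β : ℤ) * d β) = (fun β => m β - r a β) := by
        funext β
        rw [hdco β, Int.toNat_of_nonneg (Int.ediv_nonneg (ht0 β) (le_of_lt (hNpos β))),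
          Int.mul_ediv_cancel' (hdvd' β)]
      refine Submodule.mem_map.mpr ⟨jk ((MvPolynomial.monomial d 1) ⊗ₜ[k] x), ⟨_, rfl⟩, ?_⟩
      show Ψ (jk ((MvPolynomial.monomial d 1) ⊗ₜ[k] x))
        = (AddMonoidAlgebra.single m (1 : k)) ⊗ₜ[k] x
      rw [hjkdef, LinearMap.rTensor_tmul]
      have hφd : φlin (MvPolynomial.monomial d (1 : k))
          = AddMonoidAlgebra.single (fun β => m β - r a β) (1 : k) := by
        rw [hφlindef]
        show MvPolynomial.aeval (R := k) _ (MvPolynomial.monomial d (1 : k)) = _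
        rw [Stmt14Aux.phi_monomial N d 1, hd]
      rw [hφd, hΨt _ hx, AddMonoidAlgebra.single_mul_single, mul_one,
        show (fun β => m β - r a β) + r a = m from by
          funext β
          show (m β - r a β) + r a β = m β
          ring]
  refine ⟨?_, ?_, ?_⟩
  · -- freeness
    have e1 : (P ⊗[k] 𝔤) ≃ₗ[P] M0 := LinearEquiv.ofInjective jP (by exact hjkInj)
    have e2 : M0 ≃ₗ[P] (Submodule.map ΨP M0) :=
      Submodule.equivMapOfInjective ΨP (by exact hΨinj) M0
    have e3 : (Submodule.map ΨP M0) ≃ₗ[P] RR := LinearEquiv.ofEq _ _ hmap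
    have bb : Module.Basis (Fin (Module.finrank k 𝔤)) P (P ⊗[k] 𝔤) :=
      Module.Basis.baseChange P (Module.finBasis k 𝔤)
    exact ⟨(e3.symm.trans e2.symm).trans (e1.symm.trans bb.equivFun)⟩
  · -- bracket stability
    intro u v hu hv
    rw [hRR] at hu
    refine Submodule.span_induction
      (p := fun u _ => ∀ w, w ∈ RR → ⁅u, w⁆ ∈ RR) ?_ ?_ ?_ ?_ hu v hv
    · rintro t ⟨m, a, x, hx, hm0, hdvd, rfl⟩ w hw
      rw [hRR] at hw
      refine Submodule.span_induction
        (p := fun w _ => ⁅(AddMonoidAlgebra.single m (1 : k)) ⊗ₜ[k] x, w⁆ ∈ RR) ?_ ?_ ?_ ?_ hw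
      · rintro t' ⟨m', b, y, hy, hm0', hdvd', rfl⟩
        have hbt : ⁅(AddMonoidAlgebra.single m (1 : k)) ⊗ₜ[k] x,
            (AddMonoidAlgebra.single m' (1 : k)) ⊗ₜ[k] y⁆
            = ((AddMonoidAlgebra.single m (1 : k) * AddMonoidAlgebra.single m' (1 : k) : L))
              ⊗ₜ[k] ⁅x, y⁆ := rfl
        rw [hbt, AddMonoidAlgebra.single_mul_single, mul_one]
        refine Submodule.subset_span ⟨m + m', a + b, ⁅x, y⁆, hbr a b x y hx hy, ?_, ?_, rfl⟩
        · intro α; exact add_nonneg (hm0 α) (hm0' α)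
        · intro α
          have h7 := dvd_add (hdvd α) (hdvd' α)
          rwa [show (m α - a α) + (m' α - b α) = (m + m') α - (a + b) α from by
            simp [Pi.add_apply]; ring] at h7
      · beta_reduce
        have h0 : ⁅(AddMonoidAlgebra.single m (1 : k)) ⊗ₜ[k] x, (0 : L ⊗[k] 𝔤)⁆ = 0 :=
          lie_zero (L := L ⊗[k] 𝔤) (M := L ⊗[k] 𝔤) _
        rw [h0]; exact zero_mem RR
      · intro y z _ _ hy hz
        beta_reduce at hy hz ⊢
        have h0 : ⁅(AddMonoidAlgebra.single m (1 : k)) ⊗ₜ[k] x, y + z⁆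
            = ⁅(AddMonoidAlgebra.single m (1 : k)) ⊗ₜ[k] x, y⁆
              + ⁅(AddMonoidAlgebra.single m (1 : k)) ⊗ₜ[k] x, z⁆ := lie_add (L := L ⊗[k] 𝔤) (M := L ⊗[k] 𝔤) _ _ _
        rw [h0]; exact add_mem hy hz
      · intro p y _ hy
        beta_reduce at hy ⊢
        have h0 : ⁅(AddMonoidAlgebra.single m (1 : k)) ⊗ₜ[k] x, φ p • y⁆
            = φ p • ⁅(AddMonoidAlgebra.single m (1 : k)) ⊗ₜ[k] x, y⁆ := lie_smul (R := L) (L := L ⊗[k] 𝔤) (M := L ⊗[k] 𝔤) _ _ _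
        rw [hsmul, h0]
        exact Submodule.smul_mem RR p hy
    · intro w hw
      beta_reduce
      have h0 : ⁅(0 : L ⊗[k] 𝔤), w⁆ = 0 := zero_lie (L := L ⊗[k] 𝔤) (M := L ⊗[k] 𝔤) _
      rw [h0]; exact zero_mem RR
    · intro y z _ _ hy hz w hw
      beta_reduce at hy hz ⊢
      have h0 : ⁅y + z, w⁆ = ⁅y, w⁆ + ⁅z, w⁆ := add_lie (L := L ⊗[k] 𝔤) (M := L ⊗[k] 𝔤) _ _ _
      rw [h0]; exact add_mem (hy w hw) (hz w hw)
    · intro p y _ hy w hw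
      beta_reduce at hy ⊢
      have h0 : ⁅φ p • y, w⁆ = φ p • ⁅y, w⁆ := smul_lie (R := L) (L := L ⊗[k] 𝔤) (M := L ⊗[k] 𝔤) _ _ _
      rw [hsmul, h0]
      exact Submodule.smul_mem RR p (hy w hw)
  · -- spans over L
    rw [eq_top_iff]
    rintro v -
    have key : ∀ x : 𝔤, (1 : L) ⊗ₜ[k] x ∈ Submodule.span L (RR : Set (L ⊗[k] 𝔤)) := by
      intro x
      have := Stmt14Aux.mem_of_weights gw hdirect (TensorProduct.mk k L 𝔤 1)
        (fun t => t ∈ Submodule.span L (RR : Set (L ⊗[k] 𝔤))) ?_ (zero_mem _)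
        (fun u w hu hw => add_mem hu hw) x
      · simpa using this
      · intro a y hy
        have h1 : (AddMonoidAlgebra.single (r a) (1 : k)) ⊗ₜ[k] y
            ∈ Submodule.span L (RR : Set (L ⊗[k] 𝔤)) :=
          Submodule.subset_span (hgen a y hy)
        have h2 := Submodule.smul_mem (Submodule.span L (RR : Set (L ⊗[k] 𝔤)))
          (AddMonoidAlgebra.single (-(r a)) (1 : k)) h1
        rw [TensorProduct.smul_tmul', smul_eq_mul, AddMonoidAlgebra.single_mul_single,
          mul_one, show -(r a) + r a = 0 from by funext α; simp,
          ← AddMonoidAlgebra.one_def] at h2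
        simpa using h2
    induction v using TensorProduct.induction_on with
    | zero => exact zero_mem _
    | tmul l x =>
        have h8 := Submodule.smul_mem (Submodule.span L (RR : Set (L ⊗[k] 𝔤))) l (key x)
        rwa [TensorProduct.smul_tmul', smul_eq_mul, mul_one] at h8
    | add u w hu hw => exact add_mem hu hw
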